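/- arXiv:1310.3877 — 2 statements merged into one kernel-verified Lean document; each statement's English description precedes it below -/
import Mathlib

section
/- For every Hermitian unital linear functional τ_i on ℂ⟨x_i⟩ the following three conditions are equivalent: (i) τ_i has finite-dimensional approximants, i.e. for every m ∈ ℕ and δ > 0 there exists N ∈ ℕ with Γ_R(τ_i; N, m, δ) ≠ ∅; (ii) for every m ∈ ℕ and δ > 0 there exists N₀ ∈ ℕ such that Γ_R(τ_i; N, m, δ) ≠ ∅ for all N ≥ N₀; (iii) there exists a sequence Ξ(N), N ∈ ℕ, where each Ξ(N) is an r(i)-tuple of self-adjoint N×N complex matrices with operator norms ≤ R, such that lim_{N→∞} tr_N(p(Ξ(N))) = τ_i(p) for every p ∈ ℂ⟨x_i⟩. -/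
/-!
Orbital free pressure and its Legendre transform (Hiai–Ueda).

Common infrastructure: the free unital complex *-algebra on self-adjoint generators,
matrix microstate sets, the orbital free pressure, the orbital η-entropy, the orbital
free entropy; Lebesgue measure on self-adjoint matrices, the free pressure, free
entropy and η-entropy; Gibbs (micro-)ensembles.

The Haar probability measures `γ_{U(N)}` on the unitary groups are formalized as a
family of left-invariant Borel probability measures (which uniquely determines them).
-/

open MeasureTheory Filter Topology
open scoped BigOperators ENNReal TensorProduct ComplexOrder

noncomputable section

namespace OrbFP

/-- The algebra of `N × N` complex matrices. -/
abbrev Mat (N : ℕ) := Matrix (Fin N) (Fin N) ℂ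

/-- The normalized trace `tr_N`. -/
def trN (N : ℕ) (A : Mat N) : ℂ := A.trace / (N : ℂ)

/-- The (ℓ²-)operator norm of a matrix. -/
def opNorm {N : ℕ} (A : Mat N) : ℝ := ‖Matrix.toEuclideanCLM (𝕜 := ℂ) A‖

/-- The unitary group `U(N)`. -/
abbrev UN (N : ℕ) := Matrix.unitaryGroup (Fin N) ℂ

instance (N : ℕ) : MeasurableSpace (UN N) := borel _
instance (N : ℕ) : BorelSpace (UN N) := ⟨rfl⟩
instance (N : ℕ) : MeasurableSpace (Mat N) := borel _
instance (N : ℕ) : BorelSpace (Mat N) := ⟨rfl⟩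

/-- The free unital complex *-algebra on self-adjoint generators indexed by `X`. -/
abbrev FAlg (X : Type) := FreeAlgebra ℂ X

/-- Coefficient-wise complex conjugation on the free algebra. -/
def conjCoeff {X : Type} (p : FAlg X) : FAlg X :=
  (FreeAlgebra.equivMonoidAlgebraFreeMonoid (R := ℂ) (X := X)).symm
    (MonoidAlgebra.ofCoeff (Finsupp.mapRange (starRingEnd ℂ) (map_zero _)
      (FreeAlgebra.equivMonoidAlgebraFreeMonoid (R := ℂ) (X := X) p).coeff))

/-- The star operation of the free complex *-algebra with self-adjoint generators:
reverse words (the `star` of `FreeAlgebra`) and conjugate the coefficients. -/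
def fstar {X : Type} (p : FAlg X) : FAlg X := star (conjCoeff p)

/-- Self-adjointness in the free complex *-algebra. -/
def IsSA {X : Type} (p : FAlg X) : Prop := fstar p = p

/-- A Hermitian unital linear functional. -/
def IsHermState {X : Type} (τ : FAlg X →ₗ[ℂ] ℂ) : Prop :=
  τ 1 = 1 ∧ ∀ p, τ (fstar p) = starRingEnd ℂ (τ p)

/-- Ordered product of a word of matrices. -/
def wordMat {N : ℕ} {κ : Type} (A : κ → Mat N) (w : List κ) : Mat N := (w.map A).prod

/-- Ordered product of a word of generators in the free algebra. -/
def wordAlg {κ : Type} (w : List κ) : FAlg κ := (w.map (FreeAlgebra.ι ℂ)).prod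

/-- The microstate set `Γ_R(τ; N, m, δ)` of a functional on the free algebra on `κ`:
tuples of self-adjoint matrices of operator norm at most `R` whose normalized trace of
every word of length `1 ≤ l ≤ m` is `δ`-close to the corresponding moment of `τ`. -/
def microSet {κ : Type} (R : ℝ) (τ : FAlg κ →ₗ[ℂ] ℂ) (N m : ℕ) (δ : ℝ) :
    Set (κ → Mat N) :=
  {A | (∀ j, (A j).IsHermitian ∧ opNorm (A j) ≤ R) ∧
    ∀ w : List κ, w ≠ [] → w.length ≤ m →
      ‖trN N (wordMat A w) - τ (wordAlg w)‖ < δ}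

/-- `τ` has finite-dimensional approximants. -/
def HasFDA {κ : Type} (R : ℝ) (τ : FAlg κ →ₗ[ℂ] ℂ) : Prop :=
  ∀ (m : ℕ) (δ : ℝ), 0 < δ → ∃ N, (microSet R τ N m δ).Nonempty

variable {ι : Type} [Fintype ι]

/-- The index of the generators `x_{ij}`, `i ∈ ι`, `1 ≤ j ≤ r i`. -/
abbrev gen (r : ι → ℕ) := Σ i : ι, Fin (r i)

/-- Evaluation of the full free algebra at a family of matrix tuples. -/
def evalA {r : ι → ℕ} {N : ℕ} (A : ∀ i, Fin (r i) → Mat N) :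
    FAlg (gen r) →ₐ[ℂ] Mat N :=
  FreeAlgebra.lift ℂ fun p : gen r => A p.1 p.2

/-- The canonical embedding `ℂ⟨x_i⟩ → ℂ⟨x⟩`. -/
def inclAlg (r : ι → ℕ) (i : ι) : FAlg (Fin (r i)) →ₐ[ℂ] FAlg (gen r) :=
  FreeAlgebra.lift ℂ fun j => FreeAlgebra.ι ℂ (⟨i, j⟩ : gen r)

/-- The restriction of a functional on `ℂ⟨x⟩` to `ℂ⟨x_i⟩`. -/
def restr {r : ι → ℕ} (τ : FAlg (gen r) →ₗ[ℂ] ℂ) (i : ι) :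
    FAlg (Fin (r i)) →ₗ[ℂ] ℂ :=
  τ ∘ₗ (inclAlg r i).toLinearMap

/-- The embedding of the free algebra of a sub-system of the variables. -/
def inclSub {r : ι → ℕ} (P : ι → Prop) :
    FAlg (gen fun i : Subtype P => r i.1) →ₐ[ℂ] FAlg (gen r) :=
  FreeAlgebra.lift ℂ fun p => FreeAlgebra.ι ℂ (⟨p.1.1, p.2⟩ : gen r)

/-- Restriction of a functional to a sub-system of the variables. -/
def restrSub {r : ι → ℕ} (P : ι → Prop) (τ : FAlg (gen r) →ₗ[ℂ] ℂ) :
    FAlg (gen fun i : Subtype P => r i.1) →ₗ[ℂ] ℂ :=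
  τ ∘ₗ (inclSub P).toLinearMap

/-- The conjugated family `(V_i A_i V_i^*)_i`. -/
def conjFam {r : ι → ℕ} {N : ℕ} (V : ι → UN N) (A : ∀ i, Fin (r i) → Mat N) :
    ∀ i, Fin (r i) → Mat N :=
  fun i j => (V i : Mat N) * A i j * star (V i : Mat N)

/-- The Gibbs weight `exp(-N² tr_N(h((V_i A_i V_i^*)_i)))`. -/
def gibbsWt {r : ι → ℕ} {N : ℕ} (h : FAlg (gen r)) (A : ∀ i, Fin (r i) → Mat N)
    (V : ι → UN N) : ℝ :=
  Real.exp (-(N : ℝ) ^ 2 * (trN N (evalA (conjFam V A) h)).re)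

/-- The product `∏_i Γ_R(τ_i; N, m, δ)` of the microstate sets. -/
def microProd (R : ℝ) {r : ι → ℕ} (τs : ∀ i, FAlg (Fin (r i)) →ₗ[ℂ] ℂ)
    (N m : ℕ) (δ : ℝ) : Set (∀ i, Fin (r i) → Mat N) :=
  {A | ∀ i, A i ∈ microSet R (τs i) N m δ}

/-- The finite-`N` orbital free pressure `π_{orb,R}(h : (τ_i); N, m, δ)`
(`-∞` when some microstate set is empty). -/
def piOrbN (γ : ∀ N, Measure (UN N)) (R : ℝ) {r : ι → ℕ} (h : FAlg (gen r))
    (τs : ∀ i, FAlg (Fin (r i)) →ₗ[ℂ] ℂ) (N m : ℕ) (δ : ℝ) : EReal :=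
  ⨆ A ∈ microProd R τs N m δ,
    ((Real.log (∫ V : ι → UN N, gibbsWt h A V ∂(Measure.pi fun _ => γ N)) : ℝ) : EReal)

/-- The orbital free pressure `π_{orb,R}(h : (τ_i))`. -/
def piOrb (γ : ∀ N, Measure (UN N)) (R : ℝ) {r : ι → ℕ} (h : FAlg (gen r))
    (τs : ∀ i, FAlg (Fin (r i)) →ₗ[ℂ] ℂ) : EReal :=
  ⨅ (m : ℕ) (δ : ℝ) (_ : 0 < δ),
    Filter.limsup
      (fun N : ℕ => ((((N : ℝ) ^ 2)⁻¹ : ℝ) : EReal) * piOrbN γ R h τs N m δ)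
      Filter.atTop

/-- The "universal" `R`-norm `‖h‖_R`: the supremum of the operator norms of all
evaluations of `h` at families of self-adjoint matrices of norm at most `R`. -/
def normR (R : ℝ) {r : ι → ℕ} (h : FAlg (gen r)) : ℝ :=
  sSup {t : ℝ | ∃ (N : ℕ) (A : ∀ i, Fin (r i) → Mat N),
    (∀ i j, (A i j).IsHermitian ∧ opNorm (A i j) ≤ R) ∧ t = opNorm (evalA A h)}

/-- The minus Legendre transform `inf_h (φ(h) + π_{orb,R}(h : (τ_i)))` of the orbital
free pressure, relative to `(τ_i)`. -/
def etaOrbRel (γ : ∀ N, Measure (UN N)) (R : ℝ) {r : ι → ℕ}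
    (τ : FAlg (gen r) →ₗ[ℂ] ℂ) (τs : ∀ i, FAlg (Fin (r i)) →ₗ[ℂ] ℂ) : EReal :=
  ⨅ (h : FAlg (gen r)) (_ : IsSA h),
    (((τ h).re : ℝ) : EReal) + piOrb γ R h τs

/-- The orbital `η`-entropy `η_{orb,R}(τ)`. -/
def etaOrb (γ : ∀ N, Measure (UN N)) (R : ℝ) {r : ι → ℕ}
    (τ : FAlg (gen r) →ₗ[ℂ] ℂ) : EReal :=
  etaOrbRel γ R τ (restr τ)

/-- The microstate set `Γ_R(τ; N, m, δ)` of a functional on the full free algebra. -/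
def microFull (R : ℝ) {r : ι → ℕ} (τ : FAlg (gen r) →ₗ[ℂ] ℂ) (N m : ℕ) (δ : ℝ) :
    Set (∀ i, Fin (r i) → Mat N) :=
  {A | (∀ i j, (A i j).IsHermitian ∧ opNorm (A i j) ≤ R) ∧
    ∀ w : List (gen r), w ≠ [] → w.length ≤ m →
      ‖trN N (wordMat (fun p : gen r => A p.1 p.2) w) - τ (wordAlg w)‖ < δ}

/-- `τ` (on the full algebra) has finite-dimensional approximants. -/
def HasFDAFull (R : ℝ) {r : ι → ℕ} (τ : FAlg (gen r) →ₗ[ℂ] ℂ) : Prop :=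
  ∀ (m : ℕ) (δ : ℝ), 0 < δ → ∃ N, (microFull R τ N m δ).Nonempty

/-- The orbital microstate set `Γ_orb(τ : (A_i); N, m, δ)`. -/
def orbSet (R : ℝ) {r : ι → ℕ} (τ : FAlg (gen r) →ₗ[ℂ] ℂ) {N : ℕ}
    (A : ∀ i, Fin (r i) → Mat N) (m : ℕ) (δ : ℝ) : Set (ι → UN N) :=
  {V | conjFam V A ∈ microFull R τ N m δ}

/-- The orbital free entropy `χ_{orb,R}(τ)`. -/
def chiOrb (γ : ∀ N, Measure (UN N)) (R : ℝ) {r : ι → ℕ}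
    (τ : FAlg (gen r) →ₗ[ℂ] ℂ) : EReal :=
  ⨅ (m : ℕ) (δ : ℝ) (_ : 0 < δ),
    Filter.limsup
      (fun N : ℕ => ((((N : ℝ) ^ 2)⁻¹ : ℝ) : EReal) *
        ⨆ A ∈ microProd R (restr τ) N m δ,
          ENNReal.log ((Measure.pi fun _ : ι => γ N) (orbSet R τ A m δ)))
      Filter.atTop

/-- A tracial `R₀`-state on `ℂ⟨x⟩`. -/
def IsTracialRState {r : ι → ℕ} (R₀ : ℝ) (τ : FAlg (gen r) →ₗ[ℂ] ℂ) : Prop :=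
  IsHermState τ ∧ (∀ p q, τ (p * q) = τ (q * p)) ∧
  (∀ p, 0 ≤ (τ (fstar p * p)).re) ∧
  ∀ (i : ι) (j : Fin (r i)) (k : ℕ) (p : FAlg (gen r)),
    (τ (fstar p * FreeAlgebra.ι ℂ (⟨i, j⟩ : gen r) ^ (2 * k) * p)).re
      ≤ R₀ ^ (2 * k) * (τ (fstar p * p)).re

/-- `τ` is the free product of its restrictions `τ_i`: alternating words in the
`τ`-centered subalgebras `ℂ⟨x_i⟩` have vanishing `τ`-value. -/
def IsFreeProduct {r : ι → ℕ} (τ : FAlg (gen r) →ₗ[ℂ] ℂ) : Prop :=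
  ∀ (k : ℕ), 0 < k → ∀ (idx : Fin k → ι) (p : ∀ l, FAlg (Fin (r (idx l)))),
    (∀ l, τ (inclAlg r (idx l) (p l)) = 0) →
    (∀ (l : Fin k) (hl : (l : ℕ) + 1 < k), idx l ≠ idx ⟨(l : ℕ) + 1, hl⟩) →
    τ ((List.ofFn fun l => inclAlg r (idx l) (p l)).prod) = 0

/-- The partition function `Z_N^{(h, Ξ(N))}` of the orbital Gibbs micro-ensemble. -/
def ZOrbN (γ : ∀ N, Measure (UN N)) {r : ι → ℕ} (h : FAlg (gen r)) {N : ℕ}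
    (A : ∀ i, Fin (r i) → Mat N) : ℝ :=
  ∫ V : ι → UN N, gibbsWt h A V ∂(Measure.pi fun _ => γ N)

/-- The orbital Gibbs micro-ensemble `μ_N^{(h, Ξ(N))}`. -/
def muOrbN (γ : ∀ N, Measure (UN N)) {r : ι → ℕ} (h : FAlg (gen r)) {N : ℕ}
    (A : ∀ i, Fin (r i) → Mat N) : Measure (ι → UN N) :=
  (Measure.pi fun _ => γ N).withDensity
    fun V => ENNReal.ofReal (gibbsWt h A V / ZOrbN γ h A)

/-! ### Lebesgue measure on self-adjoint matrices and one-variable quantities -/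

/-- The parametrization of self-adjoint matrices by the diagonal entries and the real
and imaginary parts of the above-diagonal entries. -/
def matOfCoord (N : ℕ) (f : Fin N × Fin N → ℝ) : Mat N :=
  Matrix.of fun p q =>
    if p = q then (f (p, p) : ℂ)
    else if p < q then (f (p, q) : ℂ) + (f (q, p) : ℂ) * Complex.I
    else (f (q, p) : ℂ) - (f (p, q) : ℂ) * Complex.I

/-- The Lebesgue measure `Λ_N` on self-adjoint `N × N` matrices. -/
def LambdaMat (N : ℕ) : Measure (Mat N) :=
  Measure.map (matOfCoord N) (volume : Measure (Fin N × Fin N → ℝ))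

/-- The product Lebesgue measure `Λ_N^{⊗n}` on `n`-tuples of self-adjoint matrices. -/
def LambdaPow (n N : ℕ) : Measure (Fin n → Mat N) :=
  Measure.map (fun f i => matOfCoord N (f i))
    (volume : Measure (Fin n → Fin N × Fin N → ℝ))

/-- Evaluation of a polynomial in `n` single variables at an `n`-tuple of matrices. -/
def evalSingle {n : ℕ} {N : ℕ} (A : Fin n → Mat N) :
    FAlg (gen fun _ : Fin n => 1) →ₐ[ℂ] Mat N :=
  evalA fun i (_ : Fin 1) => A i

/-- The set `((M_N(ℂ)^{sa})_R)^n`. -/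
def ballR (n N : ℕ) (R : ℝ) : Set (Fin n → Mat N) :=
  {A | ∀ i, (A i).IsHermitian ∧ opNorm (A i) ≤ R}

/-- The partition function `Z_{R,N}^h`. -/
def ZR (n N : ℕ) (R : ℝ) (h : FAlg (gen fun _ : Fin n => 1)) : ℝ :=
  ∫ A in ballR n N R,
    Real.exp (-(N : ℝ) ^ 2 * (trN N (evalSingle A h)).re) ∂(LambdaPow n N)

/-- The free pressure `π_R(h)`. -/
def piR (n : ℕ) (R : ℝ) (h : FAlg (gen fun _ : Fin n => 1)) : EReal :=
  Filter.limsup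
    (fun N : ℕ => ((((N : ℝ) ^ 2)⁻¹ : ℝ) : EReal) * ((Real.log (ZR n N R h) : ℝ) : EReal)
      + ((((n : ℝ) / 2 * Real.log N) : ℝ) : EReal))
    Filter.atTop

/-- The Gibbs micro-ensemble `λ_{R,N}^h`. -/
def lambdaGibbs (n N : ℕ) (R : ℝ) (h : FAlg (gen fun _ : Fin n => 1)) :
    Measure (Fin n → Mat N) :=
  ((LambdaPow n N).restrict (ballR n N R)).withDensity
    fun A => ENNReal.ofReal
      (Real.exp (-(N : ℝ) ^ 2 * (trN N (evalSingle A h)).re) / ZR n N R h)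

/-- The microstate free entropy `χ_R` of a single-variable functional. -/
def chiR1 (R : ℝ) (τ : FAlg (Fin 1) →ₗ[ℂ] ℂ) : EReal :=
  ⨅ (m : ℕ) (δ : ℝ) (_ : 0 < δ),
    Filter.limsup
      (fun N : ℕ => ((((N : ℝ) ^ 2)⁻¹ : ℝ) : EReal) *
          ENNReal.log (LambdaMat N {B : Mat N | (fun _ : Fin 1 => B) ∈ microSet R τ N m δ})
        + ((((1 : ℝ) / 2 * Real.log N) : ℝ) : EReal))
      Filter.atTop

/-- The microstate free entropy `χ_R` of a functional on `n` single variables. -/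
def chiRn (n : ℕ) (R : ℝ) (σ : FAlg (gen fun _ : Fin n => 1) →ₗ[ℂ] ℂ) : EReal :=
  ⨅ (m : ℕ) (δ : ℝ) (_ : 0 < δ),
    Filter.limsup
      (fun N : ℕ => ((((N : ℝ) ^ 2)⁻¹ : ℝ) : EReal) *
          ENNReal.log (LambdaPow n N
            {A : Fin n → Mat N | (fun i (_ : Fin 1) => A i) ∈ microFull R σ N m δ})
        + ((((n : ℝ) / 2 * Real.log N) : ℝ) : EReal))
      Filter.atTop

/-- The `η`-entropy `η_R(τ)`, the minus Legendre transform of the free pressure. -/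
def etaR (n : ℕ) (R : ℝ) (τ : FAlg (gen fun _ : Fin n => 1) →ₗ[ℂ] ℂ) : EReal :=
  ⨅ (h : FAlg (gen fun _ : Fin n => 1)) (_ : IsSA h),
    (((τ h).re : ℝ) : EReal) + piR n R h

/-! ### The doubled (tensor) orbital free pressure -/

/-- The algebraic tensor product `ℂ⟨x⟩ ⊗ ℂ⟨x⟩`. -/
abbrev TAlg (r : ι → ℕ) := TensorProduct ℂ (FAlg (gen r)) (FAlg (gen r))

/-- The functional `τ ⊗ τ` on `ℂ⟨x⟩ ⊗ ℂ⟨x⟩`. -/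
def tensFun {r : ι → ℕ} (τ : FAlg (gen r) →ₗ[ℂ] ℂ) : TAlg r →ₗ[ℂ] ℂ :=
  (TensorProduct.lid ℂ ℂ).toLinearMap ∘ₗ TensorProduct.map τ τ

/-- The normalized trace as a linear map. -/
def trLin (N : ℕ) : Mat N →ₗ[ℂ] ℂ := (N : ℂ)⁻¹ • Matrix.traceLinearMap (Fin N) ℂ ℂ

/-- The functional `tr_N ⊗ tr_N` on `M_N(ℂ) ⊗ M_N(ℂ)`. -/
def tr2 (N : ℕ) : TensorProduct ℂ (Mat N) (Mat N) →ₗ[ℂ] ℂ :=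
  (TensorProduct.lid ℂ ℂ).toLinearMap ∘ₗ TensorProduct.map (trLin N) (trLin N)

/-- Evaluation of `ℂ⟨x⟩ ⊗ ℂ⟨x⟩` at a family of matrix tuples. -/
def evalT {r : ι → ℕ} {N : ℕ} (A : ∀ i, Fin (r i) → Mat N) :
    TAlg r →ₐ[ℂ] TensorProduct ℂ (Mat N) (Mat N) :=
  Algebra.TensorProduct.map (evalA A) (evalA A)

/-- The finite-`N` doubled orbital free pressure `π^{(2)}_{orb,R}(p : (τ_i); N, m, δ)`. -/
def pi2OrbN (γ : ∀ N, Measure (UN N)) (R : ℝ) {r : ι → ℕ} (p : TAlg r)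
    (τs : ∀ i, FAlg (Fin (r i)) →ₗ[ℂ] ℂ) (N m : ℕ) (δ : ℝ) : EReal :=
  ⨆ A ∈ microProd R τs N m δ,
    ((Real.log (∫ V : ι → UN N,
        Real.exp (-(N : ℝ) ^ 2 * (tr2 N (evalT (conjFam V A) p)).re)
        ∂(Measure.pi fun _ => γ N)) : ℝ) : EReal)

/-- The doubled orbital free pressure `π^{(2)}_{orb,R}(p : (τ_i))`. -/
def pi2Orb (γ : ∀ N, Measure (UN N)) (R : ℝ) {r : ι → ℕ} (p : TAlg r)
    (τs : ∀ i, FAlg (Fin (r i)) →ₗ[ℂ] ℂ) : EReal :=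
  ⨅ (m : ℕ) (δ : ℝ) (_ : 0 < δ),
    Filter.limsup
      (fun N : ℕ => ((((N : ℝ) ^ 2)⁻¹ : ℝ) : EReal) * pi2OrbN γ R p τs N m δ)
      Filter.atTop


/-! ### Auxiliary material for Statement 0 -/

open scoped Matrix.Norms.L2Operator

instance matCStar (N : ℕ) : CStarAlgebra (Mat N) :=
  Matrix.instCStarAlgebra

lemma opNorm_eq {N : ℕ} (A : Mat N) : opNorm A = ‖A‖ := rfl

lemma coord_le_norm {N : ℕ} (y : EuclideanSpace ℂ (Fin N)) (p : Fin N) :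
    ‖y p‖ ≤ ‖y‖ := by
  rw [EuclideanSpace.norm_eq]
  calc ‖y p‖ = Real.sqrt (‖y p‖ ^ 2) := (Real.sqrt_sq (norm_nonneg _)).symm
  _ ≤ Real.sqrt (∑ i, ‖y i‖ ^ 2) := Real.sqrt_le_sqrt
      (Finset.single_le_sum (f := fun i => ‖y i‖ ^ 2) (fun i _ => sq_nonneg _)
        (Finset.mem_univ p))

lemma abs_entry_le {N : ℕ} (W : Mat N) (p q : Fin N) : ‖W p q‖ ≤ ‖W‖ := by
  have h := Matrix.l2_opNorm_mulVec W (EuclideanSpace.single q (1 : ℂ))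
  rw [EuclideanSpace.norm_single, norm_one, mul_one] at h
  set y : EuclideanSpace ℂ (Fin N) :=
    (EuclideanSpace.equiv (Fin N) ℂ).symm (W.mulVec (EuclideanSpace.single q (1 : ℂ))) with hy
  have h2 : y p = W p q := by
    show W.mulVec (EuclideanSpace.single q (1 : ℂ)) p = W p q
    have : (EuclideanSpace.single q (1 : ℂ) : Fin N → ℂ) = Pi.single q 1 := rfl
    rw [this, Matrix.mulVec_single]
    simp
  calc ‖W p q‖ = ‖y p‖ := by rw [h2]
  _ ≤ ‖y‖ := coord_le_norm y p
  _ ≤ ‖W‖ := h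

lemma abs_trace_le {N : ℕ} (W : Mat N) : ‖W.trace‖ ≤ N * ‖W‖ := by
  calc ‖W.trace‖ ≤ ∑ p : Fin N, ‖W p p‖ := by
        simpa [Matrix.trace, Matrix.diag] using
          (norm_sum_le (Finset.univ : Finset (Fin N)) (fun p => W p p))
  _ ≤ ∑ _p : Fin N, ‖W‖ := Finset.sum_le_sum fun p _ => abs_entry_le W p p
  _ = N * ‖W‖ := by simp [mul_comm]

lemma abs_trN_le {N : ℕ} (W : Mat N) : ‖trN N W‖ ≤ ‖W‖ := by
  rcases Nat.eq_zero_or_pos N with h | h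
  · subst h; simp [trN, Matrix.trace]
  · rw [trN, norm_div, Complex.norm_natCast]
    rw [div_le_iff₀ (by exact_mod_cast h)]
    simpa [mul_comm] using abs_trace_le W

lemma lift_wordAlg {κ : Type} {N : ℕ} (Ξ : κ → Mat N) (w : List κ) :
    FreeAlgebra.lift ℂ Ξ (wordAlg w) = wordMat Ξ w := by
  rw [wordAlg, wordMat, map_list_prod, List.map_map]
  congr 1
  simp [Function.comp_def]

lemma wordMat_cons {κ : Type} {N : ℕ} (A : κ → Mat N) (a : κ) (t : List κ) :
    wordMat A (a :: t) = A a * wordMat A t := by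
  simp [wordMat]

lemma wordAlg_append {κ : Type} (w w' : List κ) :
    wordAlg (w ++ w') = wordAlg w * wordAlg w' := by
  simp [wordAlg, List.map_append, List.prod_append]

lemma wordMat_map {κ : Type} {N₁ N : ℕ} (φ : Mat N₁ →⋆ₙₐ[ℂ] Mat N) (A : κ → Mat N₁)
    (w : List κ) (hw : w ≠ []) :
    wordMat (fun j => φ (A j)) w = φ (wordMat A w) := by
  induction w with
  | nil => exact absurd rfl hw
  | cons a t ih =>
    cases t with
    | nil => simp [wordMat]
    | cons b t' =>
      conv_rhs => rw [wordMat_cons, map_mul]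
      rw [wordMat_cons, ih (by simp)]

lemma norm_wordMat_le {κ : Type} {N : ℕ} {R : ℝ} (hR : 0 ≤ R) (A : κ → Mat N)
    (hA : ∀ j, ‖A j‖ ≤ R) (w : List κ) (hw : w ≠ []) : ‖wordMat A w‖ ≤ R ^ w.length := by
  induction w with
  | nil => exact absurd rfl hw
  | cons a t ih =>
    cases t with
    | nil => simpa [wordMat] using hA a
    | cons b t' =>
      rw [wordMat_cons]
      calc ‖A a * wordMat A (b :: t')‖ ≤ ‖A a‖ * ‖wordMat A (b :: t')‖ := norm_mul_le _ _
      _ ≤ R * R ^ (b :: t').length :=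
        mul_le_mul (hA a) (ih (by simp)) (norm_nonneg _) hR
      _ = R ^ (a :: b :: t').length := by
        simp [List.length_cons, pow_succ, pow_add]; ring

section Pad
variable {N₁ k s N : ℕ}

/-- The index equivalence used for block-diagonal padding. -/
def padEquiv (h : N₁ * k + s = N) : Fin N ≃ (Fin N₁ × Fin k) ⊕ Fin s :=
  (finCongr h.symm).trans <| finSumFinEquiv.symm.trans <|
    Equiv.sumCongr finProdFinEquiv.symm (Equiv.refl _)

/-- The block-diagonal padding star homomorphism. -/
def padMap (h : N₁ * k + s = N) : Mat N₁ →⋆ₙₐ[ℂ] Mat N where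
  toFun X := (Matrix.fromBlocks (Matrix.blockDiagonal fun _ : Fin k => X) 0 0
      (0 : Matrix (Fin s) (Fin s) ℂ)).submatrix (padEquiv h) (padEquiv h)
  map_add' X Y := by
    ext p q
    simp only [Matrix.submatrix_apply, Matrix.add_apply]
    rcases padEquiv h p with pa | pa <;> rcases padEquiv h q with qa | qa <;>
      simp [Matrix.blockDiagonal_apply] <;> split_ifs <;> simp
  map_zero' := by
    ext p q
    simp only [Matrix.submatrix_apply, Matrix.zero_apply]
    rcases padEquiv h p with pa | pa <;> rcases padEquiv h q with qa | qa <;>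
      simp [Matrix.blockDiagonal_apply]
  map_smul' c X := by
    ext p q
    simp only [Matrix.submatrix_apply, Matrix.smul_apply]
    rcases padEquiv h p with pa | pa <;> rcases padEquiv h q with qa | qa <;>
      simp [Matrix.blockDiagonal_apply] <;> split_ifs <;> simp
  map_mul' X Y := by
    rw [Matrix.submatrix_mul_equiv _ _ _ (padEquiv h) _]
    congr 1
    rw [Matrix.fromBlocks_multiply]
    simp [Matrix.blockDiagonal_mul]
  map_star' X := by
    simp only [Matrix.star_eq_conjTranspose, Matrix.conjTranspose_submatrix,
      Matrix.fromBlocks_conjTranspose, Matrix.blockDiagonal_conjTranspose,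
      Matrix.conjTranspose_zero]

lemma trace_submatrix_equiv' {α β : Type} [Fintype α] [Fintype β] [DecidableEq α]
    [DecidableEq β] (e : α ≃ β) (M : Matrix β β ℂ) :
    (M.submatrix e e).trace = M.trace := by
  rw [Matrix.trace, Matrix.trace]
  exact Equiv.sum_comp e (fun j => M j j)

lemma trace_padMap (h : N₁ * k + s = N) (X : Mat N₁) :
    (padMap h X).trace = k * X.trace := by
  show Matrix.trace ((Matrix.fromBlocks (Matrix.blockDiagonal fun _ : Fin k => X) 0 0
      (0 : Matrix (Fin s) (Fin s) ℂ)).submatrix (padEquiv h) (padEquiv h)) = _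
  rw [trace_submatrix_equiv']
  rw [show Matrix.trace (Matrix.fromBlocks (Matrix.blockDiagonal fun _ : Fin k => X) 0 0
      (0 : Matrix (Fin s) (Fin s) ℂ)) =
      Matrix.trace (Matrix.blockDiagonal fun _ : Fin k => X) + Matrix.trace
        (0 : Matrix (Fin s) (Fin s) ℂ) from ?_]
  · rw [Matrix.trace_blockDiagonal]
    simp [mul_comm]
  · simp [Matrix.trace, Matrix.diag, Fintype.sum_sum_type]

lemma isHermitian_padMap (h : N₁ * k + s = N) {X : Mat N₁} (hX : X.IsHermitian) :
    (padMap h X).IsHermitian := by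
  have h1 : star (padMap h X) = padMap h (star X) := (map_star (padMap h) X).symm
  have h2 : star X = X := hX
  rw [Matrix.IsHermitian, ← Matrix.star_eq_conjTranspose, h1, h2]

lemma norm_padMap_le (h : N₁ * k + s = N) (X : Mat N₁) : ‖padMap h X‖ ≤ ‖X‖ :=
  NonUnitalStarAlgHom.norm_apply_le (padMap h) X

end Pad

lemma microSet_zero_mem {rr N : ℕ} {R : ℝ} (hR : 0 ≤ R) (τ : FAlg (Fin rr) →ₗ[ℂ] ℂ)
    (m : ℕ) (δ : ℝ)
    (hτ : ∀ w : List (Fin rr), w ≠ [] → w.length ≤ m → ‖τ (wordAlg w)‖ < δ) :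
    (fun _ : Fin rr => (0 : Mat N)) ∈ microSet R τ N m δ := by
  constructor
  · intro j
    refine ⟨Matrix.isHermitian_zero, ?_⟩
    rw [opNorm_eq, norm_zero]; exact hR
  · intro w hw hl
    have hz : wordMat (fun _ : Fin rr => (0 : Mat N)) w = 0 := by
      cases w with
      | nil => exact absurd rfl hw
      | cons a t => rw [wordMat_cons, zero_mul]
    rw [hz]
    simpa [trN] using hτ w hw hl

lemma fda_to_all {rr : ℕ} {R : ℝ} (hR : 0 < R) (τ : FAlg (Fin rr) →ₗ[ℂ] ℂ)
    (hfda : HasFDA R τ) (m : ℕ) (δ : ℝ) (hδ : 0 < δ) :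
    ∃ N₀ : ℕ, ∀ N, N₀ ≤ N → (microSet R τ N m δ).Nonempty := by
  obtain ⟨N₁, A, hA⟩ := hfda m (δ / 2) (by positivity)
  rcases Nat.eq_zero_or_pos N₁ with h0 | hN₁
  · subst h0
    refine ⟨0, fun N _ => ⟨_, microSet_zero_mem hR.le τ m δ ?_⟩⟩
    intro w hw hl
    have h1 := hA.2 w hw hl
    have h00 : trN 0 (wordMat A w) = 0 := by simp [trN]
    rw [h00] at h1
    calc ‖τ (wordAlg w)‖ = ‖0 - τ (wordAlg w)‖ := by simp
    _ < δ / 2 := h1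
    _ < δ := by linarith
  · set C : ℝ := (max 1 R) ^ m with hCdef
    have hC1 : 1 ≤ C := one_le_pow₀ (le_max_left 1 R)
    have hC0 : 0 < C := lt_of_lt_of_le one_pos hC1
    refine ⟨⌈(N₁ : ℝ) * C / (δ / 2)⌉₊ + 1, fun N hN => ?_⟩
    have hNpos : 0 < N := lt_of_lt_of_le (Nat.succ_pos _) hN
    have hNR : (0 : ℝ) < N := by exact_mod_cast hNpos
    have hN₁R : (0 : ℝ) < N₁ := by exact_mod_cast hN₁
    -- the key largeness estimate : N₁ * C / N < δ / 2
    have hbig : (N₁ : ℝ) * C / N < δ / 2 := by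
      have h1 : (N₁ : ℝ) * C / (δ / 2) < N := by
        calc (N₁ : ℝ) * C / (δ / 2) ≤ (⌈(N₁ : ℝ) * C / (δ / 2)⌉₊ : ℝ) := Nat.le_ceil _
        _ < (⌈(N₁ : ℝ) * C / (δ / 2)⌉₊ : ℝ) + 1 := by linarith
        _ ≤ N := by exact_mod_cast hN
      rw [div_lt_iff₀ hNR]
      rw [div_lt_iff₀ (by linarith : (0:ℝ) < δ / 2)] at h1
      linarith
    set k := N / N₁ with hk
    set s := N % N₁ with hs
    have hks : N₁ * k + s = N := Nat.div_add_mod N N₁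
    have hsN₁ : s < N₁ := Nat.mod_lt _ hN₁
    set φ := padMap hks with hφ
    refine ⟨fun j => φ (A j), ⟨fun j => ?_, fun w hw hl => ?_⟩⟩
    · refine ⟨isHermitian_padMap hks (hA.1 j).1, ?_⟩
      rw [opNorm_eq]
      exact le_trans (norm_padMap_le hks (A j)) (by rw [← opNorm_eq]; exact (hA.1 j).2)
    · -- trace estimate
      set W := wordMat A w with hW
      have hmap : wordMat (fun j => φ (A j)) w = φ W := wordMat_map φ A w hw
      set c : ℝ := ((k : ℝ) * N₁) / N with hc
      have hc1 : c ≤ 1 := by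
        rw [hc, div_le_one hNR]
        have : (N₁ : ℝ) * k + s = N := by exact_mod_cast congrArg (Nat.cast : ℕ → ℝ) hks
        have hs0 : (0 : ℝ) ≤ s := Nat.cast_nonneg s
        nlinarith
      have hc0 : 0 ≤ c := by positivity
      have h1mc : 1 - c ≤ (N₁ : ℝ) / N := by
        have hcast : (N₁ : ℝ) * k + s = N := by exact_mod_cast congrArg (Nat.cast : ℕ → ℝ) hks
        have hsle : (s : ℝ) ≤ N₁ := by exact_mod_cast hsN₁.le
        have heq : (1 : ℝ) - c = (s : ℝ) / N := by
          rw [hc]; field_simp; linarith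
        rw [heq]
        gcongr
      have htr : trN N (φ W) = (c : ℂ) * trN N₁ W := by
        rw [trN, trN, trace_padMap hks, hc]
        have hNne : (N : ℂ) ≠ 0 := by exact_mod_cast hNpos.ne'
        have hN₁ne : (N₁ : ℂ) ≠ 0 := by exact_mod_cast hN₁.ne'
        push_cast
        field_simp
      have ht := hA.2 w hw hl
      have hWnorm : ‖W‖ ≤ C := by
        calc ‖W‖ ≤ R ^ w.length := norm_wordMat_le hR.le A
              (fun j => by rw [← opNorm_eq]; exact (hA.1 j).2) w hw
        _ ≤ (max 1 R) ^ w.length := pow_le_pow_left₀ hR.le (le_max_right 1 R) _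
        _ ≤ (max 1 R) ^ m := pow_le_pow_right₀ (le_max_left 1 R) hl
      have habs : ‖trN N₁ W‖ ≤ C := (abs_trN_le W).trans hWnorm
      have hsplit : ‖trN N (wordMat (fun j => φ (A j)) w) - τ (wordAlg w)‖
          ≤ (1 - c) * ‖trN N₁ W‖ + ‖trN N₁ W - τ (wordAlg w)‖ := by
        rw [hmap, htr]
        calc ‖(c:ℂ) * trN N₁ W - τ (wordAlg w)‖
            = ‖((c:ℂ) - 1) * trN N₁ W + (trN N₁ W - τ (wordAlg w))‖ := by
              rw [show ((c:ℂ) * trN N₁ W - τ (wordAlg w))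
                = (((c:ℂ) - 1) * trN N₁ W + (trN N₁ W - τ (wordAlg w))) by ring]
        _ ≤ ‖((c:ℂ) - 1) * trN N₁ W‖
              + ‖trN N₁ W - τ (wordAlg w)‖ := norm_add_le _ _
        _ = (1 - c) * ‖trN N₁ W‖
              + ‖trN N₁ W - τ (wordAlg w)‖ := by
            rw [norm_mul]
            congr 1
            rw [show ((c:ℂ) - 1) = ((c - 1 : ℝ) : ℂ) by push_cast; ring,
              Complex.norm_real, Real.norm_eq_abs, abs_of_nonpos (by linarith), neg_sub]
      calc ‖trN N (wordMat (fun j => φ (A j)) w) - τ (wordAlg w)‖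
          ≤ (1 - c) * ‖trN N₁ W‖ + ‖trN N₁ W - τ (wordAlg w)‖ := hsplit
      _ < (N₁ / N) * C + δ / 2 := by
          refine add_lt_add_of_le_of_lt ?_ ht
          exact mul_le_mul h1mc habs (norm_nonneg _) (by positivity)
      _ ≤ δ / 2 + δ / 2 := by
          have h2 : (N₁ : ℝ) / N * C = N₁ * C / N := by ring
          rw [h2]
          linarith
      _ = δ := by ring

lemma trN_one {N : ℕ} (hN : 0 < N) : trN N (1 : Mat N) = 1 := by
  rw [trN, Matrix.trace_one]
  have : (N : ℂ) ≠ 0 := by exact_mod_cast hN.ne'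
  simp [this]

lemma trN_add {N : ℕ} (X Y : Mat N) : trN N (X + Y) = trN N X + trN N Y := by
  simp [trN, Matrix.trace_add, add_div]

lemma trN_smul {N : ℕ} (c : ℂ) (X : Mat N) : trN N (c • X) = c * trN N X := by
  simp [trN, Matrix.trace_smul, smul_eq_mul, mul_div_assoc]

lemma span_wordAlg {rr : ℕ} (p : FAlg (Fin rr)) :
    p ∈ Submodule.span ℂ (Set.range (wordAlg : List (Fin rr) → FAlg (Fin rr))) := by
  set S := Submodule.span ℂ (Set.range (wordAlg : List (Fin rr) → FAlg (Fin rr))) with hS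
  induction p using FreeAlgebra.induction with
  | grade0 r =>
    have h1 : (1 : FAlg (Fin rr)) ∈ S :=
      Submodule.subset_span ⟨[], by simp [wordAlg]⟩
    simpa [Algebra.algebraMap_eq_smul_one] using S.smul_mem r h1
  | grade1 x =>
    exact Submodule.subset_span ⟨[x], by simp [wordAlg]⟩
  | mul a b ha hb =>
    have h1 : a * b ∈ S * S := Submodule.mul_mem_mul ha hb
    have h2 : S * S ≤ S := by
      rw [hS, Submodule.span_mul_span]
      refine Submodule.span_le.mpr ?_
      rintro x ⟨u, ⟨wu, rfl⟩, v, ⟨wv, rfl⟩, rfl⟩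
      exact Submodule.subset_span ⟨wu ++ wv, by rw [wordAlg_append]⟩
    exact h2 h1
  | add a b ha hb => exact S.add_mem ha hb

lemma all_to_seq {rr : ℕ} {R : ℝ} (hR : 0 < R) (τ : FAlg (Fin rr) →ₗ[ℂ] ℂ)
    (hτ1 : τ (1 : FAlg (Fin rr)) = 1)
    (hall : ∀ (m : ℕ) (δ : ℝ), 0 < δ → ∃ N₀ : ℕ, ∀ N, N₀ ≤ N → (microSet R τ N m δ).Nonempty) :
    ∃ Ξ : (N : ℕ) → Fin rr → Mat N,
      (∀ N j, (Ξ N j).IsHermitian ∧ opNorm (Ξ N j) ≤ R) ∧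
      ∀ p : FAlg (Fin rr),
        Filter.Tendsto (fun N => trN N (FreeAlgebra.lift ℂ (Ξ N) p))
          Filter.atTop (nhds (τ p)) := by
  classical
  set P : ℕ → ℕ → Prop := fun N m => (microSet R τ N m (1 / (m + 1))).Nonempty with hP
  have hP0 : ∀ N, P N 0 := by
    intro N
    exact ⟨_, microSet_zero_mem hR.le τ 0 _ (fun w hw hl => by
      simp at hl; exact absurd hl hw)⟩
  set g : ℕ → ℕ := fun N => Nat.findGreatest (P N) N with hg
  have hPg : ∀ N, P N (g N) := fun N => Nat.findGreatest_spec (Nat.zero_le N) (hP0 N)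
  set Ξ : (N : ℕ) → Fin rr → Mat N := fun N => (hPg N).choose with hΞ
  have hmem : ∀ N, Ξ N ∈ microSet R τ N (g N) (1 / (g N + 1)) := fun N => (hPg N).choose_spec
  have hgtend : ∀ m : ℕ, ∀ᶠ N in Filter.atTop, m ≤ g N := by
    intro m
    obtain ⟨N₀, hN₀⟩ := hall m (1 / (m + 1)) (by positivity)
    rw [Filter.eventually_atTop]
    exact ⟨max N₀ m, fun N hN =>
      Nat.le_findGreatest (le_trans (le_max_right _ _) hN)
        (hN₀ N (le_trans (le_max_left _ _) hN))⟩
  have hword : ∀ w : List (Fin rr),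
      Filter.Tendsto (fun N => trN N (wordMat (Ξ N) w)) Filter.atTop (nhds (τ (wordAlg w))) := by
    intro w
    rcases eq_or_ne w [] with rfl | hw
    · have : wordAlg ([] : List (Fin rr)) = 1 := by simp [wordAlg]
      rw [this, hτ1]
      refine Filter.Tendsto.congr' ?_ tendsto_const_nhds
      filter_upwards [Filter.eventually_ge_atTop 1] with N hN
      have : wordMat (Ξ N) ([] : List (Fin rr)) = 1 := by simp [wordMat]
      rw [this, trN_one hN]
    · rw [Metric.tendsto_atTop]
      intro ε hε
      obtain ⟨M, hM⟩ := exists_nat_one_div_lt hε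
      have hev := (hgtend (max M w.length)).and (Filter.eventually_ge_atTop 0)
      rw [Filter.eventually_atTop] at hev
      obtain ⟨N₀, hN₀⟩ := hev
      refine ⟨N₀, fun N hN => ?_⟩
      have hgN := (hN₀ N hN).1
      have hlen : w.length ≤ g N := le_trans (le_max_right _ _) hgN
      have hMg : M ≤ g N := le_trans (le_max_left _ _) hgN
      have h1 := (hmem N).2 w hw hlen
      rw [Complex.dist_eq]
      calc ‖trN N (wordMat (Ξ N) w) - τ (wordAlg w)‖
          < 1 / (g N + 1) := h1
      _ ≤ 1 / (M + 1) := by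
          have hMg' : (M : ℝ) + 1 ≤ (g N : ℝ) + 1 := by
            have : (M : ℝ) ≤ g N := by exact_mod_cast hMg
            linarith
          exact one_div_le_one_div_of_le (by positivity) hMg' 
      _ < ε := hM
  refine ⟨Ξ, fun N j => (hmem N).1 j, ?_⟩
  set S : Submodule ℂ (FAlg (Fin rr)) :=
    { carrier := {p | Filter.Tendsto (fun N => trN N (FreeAlgebra.lift ℂ (Ξ N) p))
        Filter.atTop (nhds (τ p))}
      add_mem' := by
        intro p q hp hq
        simp only [Set.mem_setOf_eq] at *
        have heq : (fun N => trN N (FreeAlgebra.lift ℂ (Ξ N) (p + q)))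
            = fun N => trN N (FreeAlgebra.lift ℂ (Ξ N) p)
              + trN N (FreeAlgebra.lift ℂ (Ξ N) q) := by
          funext N; rw [map_add, trN_add]
        rw [heq, map_add]
        exact Filter.Tendsto.add hp hq
      zero_mem' := by
        simp only [Set.mem_setOf_eq, map_zero]
        have heq : (fun N : ℕ => trN N (0 : Mat N)) = fun _ => (0 : ℂ) := by
          funext N; simp [trN]
        rw [heq]
        exact tendsto_const_nhds
      smul_mem' := by
        intro c p hp
        simp only [Set.mem_setOf_eq] at *
        have heq : (fun N => trN N (FreeAlgebra.lift ℂ (Ξ N) (c • p)))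
            = fun N => c * trN N (FreeAlgebra.lift ℂ (Ξ N) p) := by
          funext N; rw [_root_.map_smul, trN_smul]
        rw [heq, _root_.map_smul, smul_eq_mul]
        exact Filter.Tendsto.const_mul c hp } with hSdef
  intro p
  have hple : p ∈ S := by
    have h1 : Submodule.span ℂ (Set.range (wordAlg : List (Fin rr) → FAlg (Fin rr))) ≤ S := by
      rw [Submodule.span_le]
      rintro x ⟨w, rfl⟩
      show Filter.Tendsto _ _ _
      have heq : (fun N => trN N (FreeAlgebra.lift ℂ (Ξ N) (wordAlg w)))
          = fun N => trN N (wordMat (Ξ N) w) := by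
        funext N; rw [lift_wordAlg]
      rw [heq]
      exact hword w
    exact h1 (span_wordAlg p)
  exact hple

lemma seq_to_fda {rr : ℕ} {R : ℝ} (τ : FAlg (Fin rr) →ₗ[ℂ] ℂ)
    (Ξ : (N : ℕ) → Fin rr → Mat N)
    (hΞ : ∀ N j, (Ξ N j).IsHermitian ∧ opNorm (Ξ N j) ≤ R)
    (hconv : ∀ p : FAlg (Fin rr),
      Filter.Tendsto (fun N => trN N (FreeAlgebra.lift ℂ (Ξ N) p))
        Filter.atTop (nhds (τ p))) :
    HasFDA R τ := by
  intro m δ hδ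
  have hfin : {w : List (Fin rr) | w.length ≤ m}.Finite := List.finite_length_le _ m
  have hev : ∀ w : List (Fin rr), ∀ᶠ N in Filter.atTop,
      ‖trN N (wordMat (Ξ N) w) - τ (wordAlg w)‖ < δ := by
    intro w
    have h1 := hconv (wordAlg w)
    have heq : (fun N => trN N (FreeAlgebra.lift ℂ (Ξ N) (wordAlg w)))
        = fun N => trN N (wordMat (Ξ N) w) := by
      funext N; rw [lift_wordAlg]
    rw [heq, Metric.tendsto_atTop] at h1
    obtain ⟨N₀, hN₀⟩ := h1 δ hδ
    rw [Filter.eventually_atTop]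
    exact ⟨N₀, fun N hN => by rw [← Complex.dist_eq]; exact hN₀ N hN⟩
  have hall : ∀ᶠ N in Filter.atTop, ∀ w ∈ {w : List (Fin rr) | w.length ≤ m},
      ‖trN N (wordMat (Ξ N) w) - τ (wordAlg w)‖ < δ :=
    (Filter.eventually_all_finite hfin).mpr fun w _ => hev w
  obtain ⟨N, hN⟩ := hall.exists
  exact ⟨N, Ξ N, ⟨hΞ N, fun w hw hl => hN w hl⟩⟩

/-- Lemma 2.1: equivalence of the three forms of having
finite-dimensional approximants. -/
theorem statement0 (rr : ℕ) (hrr : 1 ≤ rr) (R : ℝ) (hR : 0 < R)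
    (τ : FAlg (Fin rr) →ₗ[ℂ] ℂ) (hτ : IsHermState τ) :
    (HasFDA R τ ↔
      ∀ (m : ℕ) (δ : ℝ), 0 < δ →
        ∃ N₀ : ℕ, ∀ N, N₀ ≤ N → (microSet R τ N m δ).Nonempty) ∧
    (HasFDA R τ ↔
      ∃ Ξ : (N : ℕ) → Fin rr → Mat N,
        (∀ N j, (Ξ N j).IsHermitian ∧ opNorm (Ξ N j) ≤ R) ∧
        ∀ p : FAlg (Fin rr),
          Filter.Tendsto (fun N => trN N (FreeAlgebra.lift ℂ (Ξ N) p))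
            Filter.atTop (nhds (τ p))) := by
  constructor
  · constructor
    · intro h m δ hδ
      exact fda_to_all hR τ h m δ hδ
    · intro h m δ hδ
      obtain ⟨N₀, hN₀⟩ := h m δ hδ
      exact ⟨N₀, hN₀ N₀ le_rfl⟩
  · constructor
    · intro h
      exact all_to_seq hR τ hτ.1 (fun m δ hδ => fda_to_all hR τ h m δ hδ)
    · rintro ⟨Ξ, hΞ, hconv⟩
      exact seq_to_fda τ Ξ hΞ hconv

end OrbFP

end
end

section
/- Let τ and τ^{(k)}, k ∈ ℕ, be Hermitian unital linear functionals on ℂ⟨x⟩ such that τ^{(k)}(p) → τ(p) as k → ∞ for every p ∈ ℂ⟨x⟩. Then η_{orb,R}(τ) ≥ limsup_{k→∞} η_{orb,R}(τ^{(k)}). -/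
/-!
Orbital free pressure and its Legendre transform (Hiai–Ueda).

Common infrastructure: the free unital complex *-algebra on self-adjoint generators,
matrix microstate sets, the orbital free pressure, the orbital η-entropy, the orbital
free entropy; Lebesgue measure on self-adjoint matrices, the free pressure, free
entropy and η-entropy; Gibbs (micro-)ensembles.

The Haar probability measures `γ_{U(N)}` on the unitary groups are formalized as a
family of left-invariant Borel probability measures (which uniquely determines them).
-/

open MeasureTheory Filter Topology
open scoped BigOperators ENNReal TensorProduct ComplexOrder

noncomputable section

namespace OrbFP

variable {ι : Type} [Fintype ι]

private lemma ereal_le_add_eps {x y : EReal} (h : ∀ ε : ℝ, 0 < ε → x ≤ y + (ε : EReal)) :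
    x ≤ y := by
  induction y with
  | bot => simpa using h 1 one_pos
  | coe y =>
    induction x with
    | bot => exact bot_le
    | coe x =>
      norm_cast
      refine le_of_forall_pos_le_add fun ε hε => ?_
      have := h ε hε
      norm_cast at this
    | top =>
      exfalso
      have := h 1 one_pos
      rw [top_le_iff, ← EReal.coe_add] at this
      exact EReal.coe_ne_top _ this
  | top => exact le_top

private lemma ereal_le_add_iInf {α : Sort*} {x : EReal} {a : ℝ} {f : α → EReal}
    (h : ∀ i, x ≤ (a : EReal) + f i) : x ≤ (a : EReal) + ⨅ i, f i := by
  have h1 : x - (a : EReal) ≤ ⨅ i, f i :=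
    le_iInf fun i => EReal.sub_le_of_le_add' (h i)
  rw [EReal.sub_le_iff_le_add (Or.inl (EReal.coe_ne_bot a)) (Or.inl (EReal.coe_ne_top a))] at h1
  rwa [add_comm] at h1

/-- Proposition 3.3 (4): upper semicontinuity of the orbital
`η`-entropy in the weak* topology. -/
theorem statement8 {n : ℕ} (hn : 1 ≤ n) (r : Fin n → ℕ) (hr : ∀ i, 1 ≤ r i) (R : ℝ) (hR : 0 < R)
    (γ : ∀ N, Measure (UN N)) [∀ N, IsProbabilityMeasure (γ N)]
    (hγ : ∀ N, (γ N).IsMulLeftInvariant)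
    (τ : FAlg (gen r) →ₗ[ℂ] ℂ) (hτ : IsHermState τ)
    (τk : ℕ → FAlg (gen r) →ₗ[ℂ] ℂ) (hτk : ∀ k, IsHermState (τk k))
    (hconv : ∀ p : FAlg (gen r),
      Filter.Tendsto (fun k => τk k p) Filter.atTop (nhds (τ p))) :
    Filter.limsup (fun k => etaOrb γ R (τk k)) Filter.atTop ≤ etaOrb γ R τ := by
  rw [etaOrb, etaOrbRel]
  refine le_iInf fun h => le_iInf fun hSA => ?_
  rw [piOrb]
  refine ereal_le_add_iInf fun m => ereal_le_add_iInf fun δ => ereal_le_add_iInf fun hδ => ?_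
  set L : EReal := Filter.limsup
      (fun N : ℕ => ((((N : ℝ) ^ 2)⁻¹ : ℝ) : EReal) * piOrbN γ R h (restr τ) N m δ)
      Filter.atTop with hLdef
  refine ereal_le_add_eps fun ε hε => ?_
  rw [show (((τ h).re : ℝ) : EReal) + L + (ε : EReal)
      = (((τ h).re + ε : ℝ) : EReal) + L by rw [add_right_comm, ← EReal.coe_add]]
  -- eventual closeness of the moments
  have h2 : ∀ᶠ k in Filter.atTop, ∀ i : Fin n, ∀ w : List (Fin (r i)), w.length ≤ m →
      ‖restr (τk k) i (wordAlg w) - restr τ i (wordAlg w)‖ < δ / 2 := by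
    rw [Filter.eventually_all]
    intro i
    have hfin : {w : List (Fin (r i)) | w.length ≤ m}.Finite := List.finite_length_le _ m
    refine (Filter.eventually_all_finite hfin).2 fun w _ => ?_
    have hc := hconv (inclAlg r i (wordAlg w))
    have hball := Metric.tendsto_nhds.mp hc (δ / 2) (by linarith)
    refine hball.mono fun k hk => ?_
    simpa [restr, Complex.dist_eq] using hk
  have h1 : ∀ᶠ k in Filter.atTop, (τk k h).re < (τ h).re + ε :=
    Filter.Tendsto.eventually_lt_const (by linarith)
      ((Complex.continuous_re.tendsto _).comp (hconv h))
  refine Filter.limsup_le_of_le (by isBoundedDefault) ?_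
  filter_upwards [h1, h2] with k hk1 hk2
  have step1 : etaOrb γ R (τk k)
      ≤ (((τk k h).re : ℝ) : EReal) + piOrb γ R h (restr (τk k)) := by
    rw [etaOrb, etaOrbRel]
    exact iInf₂_le h hSA
  have step2 : piOrb γ R h (restr (τk k)) ≤ L := by
    rw [piOrb]
    refine le_trans (iInf_le_of_le m (iInf_le_of_le (δ / 2)
      (iInf_le _ (by linarith : (0:ℝ) < δ / 2)))) ?_
    refine Filter.limsup_le_limsup (Filter.Eventually.of_forall fun N => ?_)
      (by isBoundedDefault) (by isBoundedDefault)
    refine mul_le_mul_of_nonneg_left ?_ (EReal.coe_nonneg.2 (by positivity))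
    refine biSup_mono fun A hA => ?_
    intro i
    obtain ⟨hnorm, hmom⟩ := hA i
    refine ⟨hnorm, fun w hw hwl => ?_⟩
    calc ‖trN N (wordMat (A i) w) - restr τ i (wordAlg w)‖
        ≤ ‖trN N (wordMat (A i) w) - restr (τk k) i (wordAlg w)‖
          + ‖restr (τk k) i (wordAlg w) - restr τ i (wordAlg w)‖ :=
          norm_sub_le_norm_sub_add_norm_sub _ _ _
      _ < δ / 2 + δ / 2 := add_lt_add (hmom w hw hwl) (hk2 i w hwl)
      _ = δ := by ring
  calc etaOrb γ R (τk k)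
      ≤ (((τk k h).re : ℝ) : EReal) + piOrb γ R h (restr (τk k)) := step1
    _ ≤ (((τ h).re + ε : ℝ) : EReal) + L :=
        add_le_add (EReal.coe_le_coe_iff.2 hk1.le) step2


end OrbFP

end
end
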